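/- If B₁ and B₂ are subspaces of V that are both strong in V, then B₁ ∩ B₂ is strong in V. -/

import Mathlib

/-!
Common notions: for a subspace `A` of an ambient `K`-vector space `M`, `wedge2 K A` is the
image of the exterior square `⋀² A` inside the exterior algebra of `M` (the span of the
products `a ∧ b` for `a, b ∈ A`).  For subspaces `C`, `B`, `fdim K C B` (resp. `cdim K C B`)
is the dimension of `B` over `C`, i.e. of the quotient `B / (C ∩ B)`, as a natural number
(resp. as a cardinal), and `FinOver K C B` says that `B` is finite-dimensional over `C`.
Relative to a fixed subspace `N` of `⋀² M`, writing `N(X) := N ⊓ wedge2 K X`,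
`pdim K N C B` is the relative predimension `δ(B/C) = dim(B/C) - dim(N(B)/N(C))` and
`pdim0 K N A = δ(A) = dim A - dim N(A)`.  `Strong K N B A` says that `B` is strong
(self-sufficient) in `A`:  `δ(C/B) ≥ 0` (stated in the equivalent subtraction-free form
`dim(N(C)/N(B)) ≤ dim(C/B)`) for every intermediate subspace `C` finite-dimensional over
`B`; `MinStrong K N B A` says that `A` is a minimal strong extension of `B`.
-/

noncomputable section

universe u v

variable (K : Type u) [Field K] {M : Type v} [AddCommGroup M] [Module K M]

/-- The image of the exterior square `⋀² A` of a subspace `A` inside the exterior algebra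
of the ambient space. -/
def wedge2 (A : Submodule K M) : Submodule K (ExteriorAlgebra K M) :=
  Submodule.span K
    {z | ∃ a ∈ A, ∃ b ∈ A, z = ExteriorAlgebra.ι K a * ExteriorAlgebra.ι K b}

/-- The relative dimension `dim (B / C)`, as a natural number. -/
def fdim (C B : Submodule K M) : ℕ :=
  Module.finrank K (↥B ⧸ Submodule.comap B.subtype C)

/-- The relative dimension `dim (B / C)`, as a cardinal. -/
def cdim (C B : Submodule K M) : Cardinal :=
  Module.rank K (↥B ⧸ Submodule.comap B.subtype C)

/-- `B` is finite-dimensional over `C`. -/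
def FinOver (C B : Submodule K M) : Prop :=
  Module.Finite K (↥B ⧸ Submodule.comap B.subtype C)

/-- The relative predimension `δ(B/C) = dim(B/C) - dim(N(B)/N(C))` with respect to `N`. -/
def pdim (N : Submodule K (ExteriorAlgebra K M)) (C B : Submodule K M) : ℤ :=
  (fdim K C B : ℤ) - (fdim K (N ⊓ wedge2 K C) (N ⊓ wedge2 K B) : ℤ)

/-- The predimension `δ(A) = dim A - dim N(A)` with respect to `N`. -/
def pdim0 (N : Submodule K (ExteriorAlgebra K M)) (A : Submodule K M) : ℤ :=
  (Module.finrank K ↥A : ℤ) - (Module.finrank K ↥(N ⊓ wedge2 K A) : ℤ)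

/-- `B` is strong (self-sufficient) in `A` with respect to `N`. -/
def Strong (N : Submodule K (ExteriorAlgebra K M)) (B A : Submodule K M) : Prop :=
  B ≤ A ∧ ∀ C : Submodule K M, B ≤ C → C ≤ A → FinOver K B C →
    cdim K (N ⊓ wedge2 K B) (N ⊓ wedge2 K C) ≤ Cardinal.lift.{u} (cdim K B C)

/-- `A` is a minimal strong extension of `B` with respect to `N`. -/
def MinStrong (N : Submodule K (ExteriorAlgebra K M)) (B A : Submodule K M) : Prop :=
  Strong K N B A ∧ B < A ∧ ∀ C : Submodule K M, B < C → C < A → ¬ Strong K N C A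




section Aux

universe w x

variable {L : Type w} [Field L] {W : Type x} [AddCommGroup W] [Module L W]

/-- `wedge2` is monotone. -/
theorem wedge2_mono' {A A' : Submodule L W} (h : A ≤ A') : wedge2 L A ≤ wedge2 L A' :=
  Submodule.span_mono (by rintro z ⟨a, ha, b, hb, rfl⟩; exact ⟨a, h ha, b, h hb, rfl⟩)

/-- The key linear algebra fact: `⋀²X ∩ ⋀²Y ⊆ ⋀²(X ∩ Y)`. -/
theorem wedge2_inf_le (X Y : Submodule L W) :
    wedge2 L X ⊓ wedge2 L Y ≤ wedge2 L (X ⊓ Y) := by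
  classical
  -- choose a complement U of X ⊓ Y inside Y
  obtain ⟨U', hU'⟩ := Submodule.exists_isCompl (Submodule.comap Y.subtype (X ⊓ Y))
  set U : Submodule L W := U'.map Y.subtype with hUdef
  have hUY : U ≤ Y := by
    rintro _ ⟨u, _, rfl⟩; exact u.2
  have hXU : X ⊓ U = ⊥ := by
    rw [eq_bot_iff]
    rintro x ⟨hxX, hxU⟩
    obtain ⟨u, huU', rfl⟩ := hxU
    have hu : u ∈ Submodule.comap Y.subtype (X ⊓ Y) := ⟨hxX, u.2⟩
    have hu0 : u = 0 := (Submodule.mem_bot _).mp (hU'.disjoint.le_bot ⟨hu, huU'⟩)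
    simp [hu0]
  have hsup : (X ⊓ Y) ⊔ U = Y := by
    apply le_antisymm (sup_le inf_le_right hUY)
    intro y hy
    have : (⟨y, hy⟩ : Y) ∈ Submodule.comap Y.subtype (X ⊓ Y) ⊔ U' := by
      rw [hU'.sup_eq_top]; trivial
    obtain ⟨c, hc, u, hu, hcu⟩ := Submodule.mem_sup.mp this
    have : y = (c : W) + (u : W) := by
      have := congrArg (Y.subtype) hcu; simpa using this.symm
    rw [this]
    exact Submodule.add_mem _ (Submodule.mem_sup_left hc)
      (Submodule.mem_sup_right ⟨u, hu, rfl⟩)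
  obtain ⟨Wc, hWc⟩ := Submodule.exists_isCompl (X ⊔ U)
  have hcompl : IsCompl X (U ⊔ Wc) := by
    constructor
    · rw [disjoint_iff, eq_bot_iff]
      rintro x ⟨hxX, hxUW⟩
      obtain ⟨u, hu, w, hw, rfl⟩ := Submodule.mem_sup.mp hxUW
      have hwmem : w ∈ (X ⊔ U) ⊓ Wc := by
        constructor
        · have : u + w - u ∈ X ⊔ U := by
            exact Submodule.sub_mem _ (Submodule.mem_sup_left hxX) (Submodule.mem_sup_right hu)
          simpa using this
        · exact hw
      have hw0 : w = 0 := by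
        have := hWc.disjoint.le_bot hwmem
        simpa using this
      subst hw0
      have : u + 0 ∈ X ⊓ U := ⟨hxX, by simpa using hu⟩
      rw [hXU] at this
      simpa using this
    · rw [codisjoint_iff, ← sup_assoc, hWc.sup_eq_top]
  -- the projection onto X killing U and Wc
  set g : W →ₗ[L] W := X.subtype ∘ₗ Submodule.projectionOnto X (U ⊔ Wc) hcompl with hg
  have hgX : ∀ x ∈ X, g x = x := by
    intro x hx
    have := Submodule.projectionOnto_apply_left hcompl ⟨x, hx⟩
    simp only [hg, LinearMap.comp_apply]
    rw [this]
    rfl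
  have hgU : ∀ u ∈ U, g u = 0 := by
    intro u hu
    have := Submodule.projectionOnto_apply_of_mem_right hcompl (Submodule.mem_sup_left hu)
    simp only [hg, LinearMap.comp_apply]
    rw [this]; simp
  have hgY : ∀ y ∈ Y, g y ∈ X ⊓ Y := by
    intro y hy
    rw [← hsup] at hy
    obtain ⟨c, hc, u, hu, rfl⟩ := Submodule.mem_sup.mp hy
    rw [map_add, hgX c hc.1, hgU u hu, add_zero]
    exact hc
  -- the induced algebra endomorphism of the exterior algebra
  set G := ExteriorAlgebra.map (R := L) g with hG
  rintro z ⟨hzX, hzY⟩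
  have hfix : G z = z := by
    refine Submodule.span_induction (p := fun w _ => G w = w) ?_ ?_ ?_ ?_ hzX
    · rintro _ ⟨a, ha, b, hb, rfl⟩
      rw [map_mul, ExteriorAlgebra.map_apply_ι, ExteriorAlgebra.map_apply_ι,
        hgX a ha, hgX b hb]
    · simp
    · intro a b _ _ pa pb; rw [map_add, pa, pb]
    · intro r a _ pa; rw [map_smul, pa]
  have himg : G z ∈ wedge2 L (X ⊓ Y) := by
    refine Submodule.span_induction (p := fun w _ => G w ∈ wedge2 L (X ⊓ Y)) ?_ ?_ ?_ ?_ hzY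
    · rintro _ ⟨a, ha, b, hb, rfl⟩
      rw [map_mul, ExteriorAlgebra.map_apply_ι, ExteriorAlgebra.map_apply_ι]
      exact Submodule.subset_span ⟨g a, hgY a ha, g b, hgY b hb, rfl⟩
    · simp
    · intro a b _ _ pa pb; rw [map_add]; exact Submodule.add_mem _ pa pb
    · intro r a _ pa; rw [map_smul]; exact Submodule.smul_mem _ _ pa
  rwa [hfix] at himg

/-- Monotonicity of relative dimension. -/
theorem cdim_le_of {P P' Q Q' : Submodule L W} (hQ : Q ≤ Q') (hPP' : P ≤ P')
    (hP : ∀ x, x ∈ Q → x ∈ P' → x ∈ P) :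
    cdim L P Q ≤ cdim L P' Q' := by
  have hle : Submodule.comap Q.subtype P ≤
      Submodule.comap (Submodule.inclusion hQ) (Submodule.comap Q'.subtype P') := by
    intro x hx
    exact hPP' hx
  set f := Submodule.mapQ (Submodule.comap Q.subtype P) (Submodule.comap Q'.subtype P')
    (Submodule.inclusion hQ) hle with hf
  have hinj : Function.Injective f := by
    intro a b hab
    obtain ⟨a, rfl⟩ := Submodule.Quotient.mk_surjective _ a
    obtain ⟨b, rfl⟩ := Submodule.Quotient.mk_surjective _ b
    rw [hf, Submodule.mapQ_apply, Submodule.mapQ_apply, Submodule.Quotient.eq] at hab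
    rw [Submodule.Quotient.eq]
    have hmem : ((a - b : Q) : W) ∈ P' := by
      have : (Submodule.inclusion hQ) a - (Submodule.inclusion hQ) b ∈
          Submodule.comap Q'.subtype P' := by
        rw [← map_sub]; exact hab
      simpa using this
    exact hP _ (a - b).2 hmem
  exact LinearMap.rank_le_of_injective f hinj

/-- Additivity of relative dimension in towers. -/
theorem cdim_chain {P Q R : Submodule L W} (hPQ : P ≤ Q) (hQR : Q ≤ R) :
    cdim L P R = cdim L Q R + cdim L P Q := by
  set p := Submodule.comap R.subtype P with hp
  set q := Submodule.comap R.subtype Q with hq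
  have hpq : p ≤ q := fun x hx => hPQ hx
  have e1 : ((↥R ⧸ p) ⧸ (q.map p.mkQ)) ≃ₗ[L] ↥R ⧸ q :=
    Submodule.quotientQuotientEquivQuotient p q hpq
  set f : ↥Q →ₗ[L] ↥R ⧸ p := p.mkQ ∘ₗ Submodule.inclusion hQR with hfdef
  have hker : LinearMap.ker f = Submodule.comap Q.subtype P := by
    ext x
    simp only [hfdef, LinearMap.mem_ker, LinearMap.comp_apply, Submodule.mkQ_apply,
      Submodule.Quotient.mk_eq_zero, Submodule.mem_comap]
    rfl
  have hrange : LinearMap.range f = q.map p.mkQ := by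
    rw [hfdef, LinearMap.range_comp, Submodule.range_inclusion]
  have e2 : (↥Q ⧸ Submodule.comap Q.subtype P) ≃ₗ[L] ↥(q.map p.mkQ) :=
    ((Submodule.quotEquivOfEq _ _ hker.symm).trans f.quotKerEquivRange).trans
      (LinearEquiv.ofEq _ _ hrange)
  have := rank_quotient_add_rank_of_divisionRing (q.map p.mkQ)
  rw [e1.rank_eq, e2.symm.rank_eq] at this
  exact this.symm

/-- The second isomorphism theorem for relative dimension. -/
theorem cdim_sup (A B' : Submodule L W) :
    cdim L (A ⊓ B') A = cdim L B' (A ⊔ B') :=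
  (LinearMap.quotientInfEquivSupQuotient A B').rank_eq

theorem finOver_of_le {P P' Q : Submodule L W} (hPP' : P ≤ P')
    (h : FinOver L P Q) : FinOver L P' Q := by
  haveI : Module.Finite L (↥Q ⧸ Submodule.comap Q.subtype P) := h
  have hle : Submodule.comap Q.subtype P ≤
      Submodule.comap (LinearMap.id : ↥Q →ₗ[L] ↥Q) (Submodule.comap Q.subtype P') :=
    fun x hx => hPP' hx
  refine Module.Finite.of_surjective
    (Submodule.mapQ (Submodule.comap Q.subtype P) (Submodule.comap Q.subtype P')
      LinearMap.id hle) ?_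
  intro x
  obtain ⟨y, rfl⟩ := Submodule.Quotient.mk_surjective _ x
  exact ⟨Submodule.Quotient.mk y, by rw [Submodule.mapQ_apply]; rfl⟩

theorem finOver_of_cdim_le {P P' Q Q' : Submodule L W}
    (h : cdim L P Q ≤ cdim L P' Q') (hfin : FinOver L P' Q') : FinOver L P Q := by
  haveI : Module.Finite L (↥Q' ⧸ Submodule.comap Q'.subtype P') := hfin
  have h2 : cdim L P' Q' < Cardinal.aleph0 := Module.rank_lt_aleph0_iff.mpr this
  exact Module.rank_lt_aleph0_iff.mp (lt_of_le_of_lt h h2)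

theorem finOver_equiv {P Q : Submodule L W} {P₂ Q₂ : Submodule L W}
    (e : (↥Q ⧸ Submodule.comap Q.subtype P) ≃ₗ[L] (↥Q₂ ⧸ Submodule.comap Q₂.subtype P₂))
    (h : FinOver L P Q) : FinOver L P₂ Q₂ := by
  haveI : Module.Finite L (↥Q ⧸ Submodule.comap Q.subtype P) := h
  exact Module.Finite.equiv e

end Aux

/-- if `B₁` and `B₂` are strong (self-sufficient) in `V`,
then so is `B₁ ⊓ B₂`. -/
theorem statement10 {K : Type u} [Field K] {M : Type v} [AddCommGroup M] [Module K M]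
    (N : Submodule K (ExteriorAlgebra K M)) (hN : N ≤ wedge2 K (⊤ : Submodule K M))
    (B₁ B₂ : Submodule K M)
    (h1 : Strong K N B₁ ⊤) (h2 : Strong K N B₂ ⊤) :
    Strong K N (B₁ ⊓ B₂) ⊤ := by
  refine ⟨le_top, ?_⟩
  intro C hBC _hle hfin
  have hDC : C ⊓ B₁ ≤ C := inf_le_left
  have hBD : B₁ ⊓ B₂ ≤ C ⊓ B₁ := le_inf hBC inf_le_left
  have hDB₂ : (C ⊓ B₁) ⊓ B₂ = B₁ ⊓ B₂ := by
    rw [inf_assoc]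
    exact inf_eq_right.mpr hBC
  -- finiteness facts
  have hfinD : FinOver K (B₁ ⊓ B₂) (C ⊓ B₁) :=
    finOver_of_cdim_le (cdim_le_of hDC le_rfl (fun x _ hx => hx)) hfin
  have hfin1 : FinOver K B₁ (C ⊔ B₁) :=
    finOver_equiv ((Submodule.quotEquivOfEq _ _ (Submodule.comap_inf _ _ _)).trans
        (LinearMap.quotientInfEquivSupQuotient C B₁))
      (finOver_of_le hBD hfin)
  have hfin2 : FinOver K B₂ ((C ⊓ B₁) ⊔ B₂) := by
    refine finOver_equiv ((Submodule.quotEquivOfEq _ _ (Submodule.comap_inf _ _ _)).trans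
      (LinearMap.quotientInfEquivSupQuotient (C ⊓ B₁) B₂)) ?_
    rw [hDB₂]
    exact hfinD
  -- strength of B₁ and B₂
  have s1 := h1.2 (C ⊔ B₁) le_sup_right le_top hfin1
  have s2 := h2.2 ((C ⊓ B₁) ⊔ B₂) le_sup_right le_top hfin2
  -- monotone injections on the N-side
  have i1 : cdim K (N ⊓ wedge2 K (C ⊓ B₁)) (N ⊓ wedge2 K C) ≤
      cdim K (N ⊓ wedge2 K B₁) (N ⊓ wedge2 K (C ⊔ B₁)) := by
    refine cdim_le_of (inf_le_inf_left _ (wedge2_mono' le_sup_left))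
      (inf_le_inf_left _ (wedge2_mono' inf_le_right)) ?_
    rintro x ⟨hxN, hxC⟩ ⟨-, hxB₁⟩
    exact ⟨hxN, wedge2_inf_le C B₁ ⟨hxC, hxB₁⟩⟩
  have i2 : cdim K (N ⊓ wedge2 K (B₁ ⊓ B₂)) (N ⊓ wedge2 K (C ⊓ B₁)) ≤
      cdim K (N ⊓ wedge2 K B₂) (N ⊓ wedge2 K ((C ⊓ B₁) ⊔ B₂)) := by
    refine cdim_le_of (inf_le_inf_left _ (wedge2_mono' le_sup_left))
      (inf_le_inf_left _ (wedge2_mono' inf_le_right)) ?_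
    rintro x ⟨hxN, hxD⟩ ⟨-, hxB₂⟩
    have := wedge2_inf_le (C ⊓ B₁) B₂ ⟨hxD, hxB₂⟩
    rw [hDB₂] at this
    exact ⟨hxN, this⟩
  -- second isomorphism theorem identities
  have e1 : cdim K (C ⊓ B₁) C = cdim K B₁ (C ⊔ B₁) := cdim_sup C B₁
  have e2 : cdim K (B₁ ⊓ B₂) (C ⊓ B₁) = cdim K B₂ ((C ⊓ B₁) ⊔ B₂) := by
    rw [← hDB₂]
    exact cdim_sup (C ⊓ B₁) B₂
  -- tower additivity
  have chainN : cdim K (N ⊓ wedge2 K (B₁ ⊓ B₂)) (N ⊓ wedge2 K C) =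
      cdim K (N ⊓ wedge2 K (C ⊓ B₁)) (N ⊓ wedge2 K C) +
        cdim K (N ⊓ wedge2 K (B₁ ⊓ B₂)) (N ⊓ wedge2 K (C ⊓ B₁)) :=
    cdim_chain (inf_le_inf_left _ (wedge2_mono' hBD))
      (inf_le_inf_left _ (wedge2_mono' hDC))
  have chainV : cdim K (B₁ ⊓ B₂) C =
      cdim K (C ⊓ B₁) C + cdim K (B₁ ⊓ B₂) (C ⊓ B₁) := cdim_chain hBD hDC
  calc cdim K (N ⊓ wedge2 K (B₁ ⊓ B₂)) (N ⊓ wedge2 K C)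
      = cdim K (N ⊓ wedge2 K (C ⊓ B₁)) (N ⊓ wedge2 K C) +
        cdim K (N ⊓ wedge2 K (B₁ ⊓ B₂)) (N ⊓ wedge2 K (C ⊓ B₁)) := chainN
    _ ≤ Cardinal.lift.{u} (cdim K (C ⊓ B₁) C) +
        Cardinal.lift.{u} (cdim K (B₁ ⊓ B₂) (C ⊓ B₁)) := by
        refine add_le_add (i1.trans ?_) (i2.trans ?_)
        · rw [e1]; exact s1
        · rw [e2]; exact s2
    _ = Cardinal.lift.{u} (cdim K (B₁ ⊓ B₂) C) := by
        rw [← Cardinal.lift_add, ← chainV]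

end
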